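/- For k ≥ 3 and n ≥ k, suppose α ∈ S_n avoids all patterns in T_k^1 \ {τ} and contains τ ∈ T_k^1 exactly once. Then α(1) ≥ n - k + 1; i.e., the first entry of α cannot be at most n-k. -/
import Mathlib


/-- An occurrence of the pattern `τ` in `α` at the strictly increasing
index sequence `f`: the subsequence `α ∘ f` is order-isomorphic to `τ`. -/
def PattOccursAt {k n : ℕ} (τ : Equiv.Perm (Fin k)) (α : Equiv.Perm (Fin n))
    (f : Fin k → Fin n) : Prop :=
  StrictMono f ∧ ∀ i j : Fin k, τ i < τ j ↔ α (f i) < α (f j)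

/-- `α` contains the pattern `τ`. -/
def Contains {k n : ℕ} (τ : Equiv.Perm (Fin k)) (α : Equiv.Perm (Fin n)) : Prop :=
  ∃ f, PattOccursAt τ α f

/-- `α` avoids the pattern `τ`. -/
def Avoids {k n : ℕ} (τ : Equiv.Perm (Fin k)) (α : Equiv.Perm (Fin n)) : Prop :=
  ¬ Contains τ α

/-- `α` contains the pattern `τ` exactly once. -/
def ContainsExactlyOnce {k n : ℕ} (τ : Equiv.Perm (Fin k)) (α : Equiv.Perm (Fin n)) : Prop :=
  ∃! f, PattOccursAt τ α f

/-- `T_k^m`: the permutations `σ` of length `k` with first entry `σ(1) = m`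
(one-based; in `Fin k` terms, `(σ 0) + 1 = m`). -/
def Tkm (k m : ℕ) : Set (Equiv.Perm (Fin k)) :=
  {σ | ∀ i : Fin k, (i : ℕ) = 0 → (σ i : ℕ) + 1 = m}

lemma exists_patt {k n : ℕ} (hk : 0 < k) (α : Equiv.Perm (Fin n)) (f : Fin k → Fin n)
    (hf : StrictMono f) (hmin : ∀ i : Fin k, i ≠ ⟨0, hk⟩ → α (f ⟨0, hk⟩) < α (f i)) :
    ∃ σ ∈ Tkm k 1, PattOccursAt σ α f := by
  set v : Fin k → Fin n := fun i => α (f i) with hv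
  have hvinj : Function.Injective v := fun a b h => hf.injective (α.injective h)
  set s : Finset (Fin n) := Finset.univ.image v with hs
  have hcard : s.card = k := by
    rw [hs, Finset.card_image_of_injective _ hvinj, Finset.card_univ, Fintype.card_fin]
  have hmem : ∀ i, v i ∈ s := fun i => Finset.mem_image_of_mem v (Finset.mem_univ i)
  set e := s.orderIsoOfFin hcard with he
  set σ' : Fin k → Fin k := fun i => e.symm ⟨v i, hmem i⟩ with hσ'
  have hlt : ∀ i j, σ' i < σ' j ↔ v i < v j := by
    intro i j
    show e.symm ⟨v i, hmem i⟩ < e.symm ⟨v j, hmem j⟩ ↔ _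
    rw [e.symm.lt_iff_lt]
    exact Subtype.mk_lt_mk
  have hinj : Function.Injective σ' := by
    intro a b h
    apply hvinj
    have := e.symm.injective h
    exact Subtype.mk_eq_mk.mp this
  set σ : Equiv.Perm (Fin k) := Equiv.ofBijective σ' (Finite.injective_iff_bijective.mp hinj)
  have hσapp : ∀ i, σ i = σ' i := fun i => rfl
  refine ⟨σ, ?_, hf, ?_⟩
  · intro i hi
    have hi0 : i = ⟨0, hk⟩ := by ext; simpa using hi
    subst hi0
    have h0 : ∀ j : Fin k, j ≠ ⟨0, hk⟩ → σ ⟨0, hk⟩ < σ j := by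
      intro j hj
      rw [hσapp, hσapp, hlt]
      exact hmin j hj
    -- σ ⟨0⟩ = 0
    by_contra hne
    obtain ⟨j, hj⟩ := σ.surjective ⟨0, hk⟩
    have hj0 : j ≠ ⟨0, hk⟩ := by
      intro h
      rw [h] at hj
      rw [hj] at hne
      simp at hne
    have := h0 j hj0
    rw [hj] at this
    have h1 : (σ ⟨0, hk⟩ : ℕ) < 0 := this
    omega
  · intro i j
    rw [hσapp, hσapp, hlt]

set_option maxHeartbeats 1000000 in
theorem stmt13 (k n : ℕ) (hk : 3 ≤ k) (hkn : k ≤ n)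
    (τ : Equiv.Perm (Fin k)) (hτ : τ ∈ Tkm k 1)
    (α : Equiv.Perm (Fin n))
    (h1 : ∀ σ ∈ Tkm k 1, σ ≠ τ → Avoids σ α)
    (h2 : ContainsExactlyOnce τ α) :
    n - k + 1 ≤ (α ⟨0, by omega⟩ : ℕ) + 1 := by
  by_contra hc
  push_neg at hc
  have hn : 0 < n := by omega
  set a0 : Fin n := ⟨0, by omega⟩ with ha0
  have ha : (α a0 : ℕ) + k < n := by omega
  have hScard : k ≤ (Finset.univ.filter (fun j => α a0 < α j)).card := by
    have hSeq : (Finset.univ.filter (fun j => α a0 < α j))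
        = (Finset.Ioi (α a0)).image α.symm := by
      ext j
      simp only [Finset.mem_filter, Finset.mem_univ, true_and, Finset.mem_image,
        Finset.mem_Ioi]
      constructor
      · intro h; exact ⟨α j, h, α.symm_apply_apply j⟩
      · rintro ⟨v, hv, rfl⟩; rwa [α.apply_symm_apply]
    rw [hSeq, Finset.card_image_of_injective _ α.symm.injective, Fin.card_Ioi]
    omega
  obtain ⟨g, hglt⟩ : ∃ g : Fin k ↪o Fin n, ∀ i, α a0 < α (g i) := by
    refine ⟨Finset.orderEmbOfCardLe _ hScard, fun i => ?_⟩
    have h := Finset.orderEmbOfCardLe_mem _ hScard i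
    rw [Finset.mem_filter] at h
    exact h.2
  have hgpos : ∀ i, 0 < (g i : ℕ) := by
    intro i
    rcases Nat.eq_zero_or_pos (g i : ℕ) with h | h
    · exfalso
      have heq : g i = a0 := by ext; simpa using h
      have h2' := hglt i
      rw [heq] at h2'
      exact lt_irrefl _ h2'
    · exact h
  have key : ∀ f : Fin k → Fin n, StrictMono f →
      (∀ i : Fin k, i ≠ ⟨0, by omega⟩ → α (f ⟨0, by omega⟩) < α (f i)) →
      PattOccursAt τ α f := by
    intro f hmono hmin
    obtain ⟨σ, hσT, hocc⟩ := exists_patt (by omega) α f hmono hmin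
    have hστ : σ = τ := by
      by_contra hne
      exact h1 σ hσT hne ⟨f, hocc⟩
    rwa [hστ] at hocc
  set F : ℕ → Fin k → Fin n := fun t i =>
      if (i : ℕ) = 0 then a0
      else if (i : ℕ) < k - 1 then g ⟨(i : ℕ) - 1, by omega⟩
      else g ⟨min (k - 2 + t) (k - 1), by omega⟩ with hF
  have build : ∀ t : ℕ, PattOccursAt τ α (F t) := by
    intro t
    apply key
    · intro i j hij
      have hij' : (i : ℕ) < (j : ℕ) := hij
      have hjk : (j : ℕ) < k := j.isLt
      simp only [hF]
      split_ifs <;>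
        first
          | (exfalso; omega)
          | (rw [Fin.lt_def, ha0]; simpa using hgpos _)
          | (apply g.strictMono; rw [Fin.mk_lt_mk]; omega)
    · intro i hi
      have hi' : (i : ℕ) ≠ 0 := fun h => hi (by ext; simpa using h)
      have e0 : F t ⟨0, by omega⟩ = a0 := if_pos rfl
      have ei : α a0 < α (F t i) := by
        simp only [hF]
        rw [if_neg hi']
        split_ifs <;> exact hglt _
      rw [e0]
      exact ei
  obtain ⟨f₀, -, huniq⟩ := h2
  have heq : F 0 = F 1 := (huniq _ (build 0)).trans (huniq _ (build 1)).symm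
  have h := congrFun heq ⟨k - 1, by omega⟩
  simp only [hF] at h
  have c1 : ¬((⟨k - 1, by omega⟩ : Fin k) : ℕ) = 0 := by simp; omega
  have c2 : ¬((⟨k - 1, by omega⟩ : Fin k) : ℕ) < k - 1 := by simp
  simp only [if_neg c1, if_neg c2] at h
  have h' := g.injective h
  rw [Fin.mk.injEq] at h'
  omega
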